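/- In the Star model with full control on the central-spin marginal and uniform control of the conditional outer-spin distributions, there exists an erasure protocol from any product thermal initial state to the deterministic all-zero state whose Fisher length is at most 2π; hence the dissipated work satisfies τβW_diss ≤ 4π², a bound independent of the number of spins N. -/

import Mathlib

open Real

open MeasureTheory

section helper

lemma aux_sum_pi (n : ℕ) (ν : Bool → ℝ) (h : ∑ b : Bool, ν b = 1) :
    ∑ f : Fin n → Bool, ∏ j, ν (f j) = 1 := by
  have := Finset.prod_univ_sum (fun _ : Fin n => (Finset.univ : Finset Bool))
      (fun _ b => ν b)
  rw [Fintype.piFinset_univ] at this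
  rw [← this]
  have hb : ∑ j : Bool, ν j = 1 := h
  rw [Finset.prod_congr rfl fun _ _ => hb, Finset.prod_const, one_pow]

lemma key_const {n : ℕ} (ρ : ℝ → Bool × (Fin n → Bool) → ℝ) (t : ℝ)
    (C : Bool × (Fin n → Bool) → ℝ)
    (hev : ∀ i, (fun s => ρ s i) =ᶠ[nhds t] fun _ => C i) :
    Real.sqrt (∑ i, (deriv (fun s => ρ s i) t) ^ 2 / ρ t i) = 0 := by
  have hd : ∀ i, deriv (fun s => ρ s i) t = 0 := fun i => by
    rw [(hev i).deriv_eq, deriv_const]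
  simp [hd]

lemma key_piece {n : ℕ} (ρ : ℝ → Bool × (Fin n → Bool) → ℝ) (t A k : ℝ)
    (K : Bool → (Fin n → Bool) → ℝ) (hK0 : ∀ c b, 0 ≤ K c b)
    (hK1 : ∀ c, ∑ b : Fin n → Bool, K c b = 1)
    (hcase : (0 < A + k * t ∧ A + k * t < π / 2) ∨ k = 0)
    (hev : ∀ c bv, (fun s => ρ s (c, bv)) =ᶠ[nhds t]
        fun s => (cond c (Real.sin (A + k * s) ^ 2) (Real.cos (A + k * s) ^ 2)) * K c bv) :
    Real.sqrt (∑ i, (deriv (fun s => ρ s i) t) ^ 2 / ρ t i) = 2 * |k| := by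
  set S := Real.sin (A + k * t) with hS
  set C := Real.cos (A + k * t) with hC
  have haff : HasDerivAt (fun s : ℝ => A + k * s) k t := by
    simpa using ((hasDerivAt_id t).const_mul k).const_add A
  have hd : ∀ c bv, deriv (fun s => ρ s (c, bv)) t
      = (cond c (2 * S * C * k) (-(2 * C * S * k))) * K c bv := by
    intro c bv
    rw [(hev c bv).deriv_eq]
    cases c with
    | true =>
      have h4 : HasDerivAt (fun s : ℝ => (Real.sin (A + k * s)) ^ 2 * K true bv)
          (2 * S * C * k * K true bv) t := by
        have h5 := ((haff.sin).pow 2).mul_const (K true bv)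
        have he : ((2:ℕ) : ℝ) * Real.sin (A + k * t) ^ (2 - 1) * (Real.cos (A + k * t) * k)
            * K true bv = 2 * S * C * k * K true bv := by
          push_cast
          simp only [pow_one, ← hS, ← hC]
          ring
        rwa [he] at h5
      simpa using h4.deriv
    | false =>
      have h4 : HasDerivAt (fun s : ℝ => (Real.cos (A + k * s)) ^ 2 * K false bv)
          (-(2 * C * S * k) * K false bv) t := by
        have h5 := ((haff.cos).pow 2).mul_const (K false bv)
        have he : ((2:ℕ) : ℝ) * Real.cos (A + k * t) ^ (2 - 1) * (-Real.sin (A + k * t) * k)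
            * K false bv = -(2 * C * S * k) * K false bv := by
          push_cast
          simp only [pow_one, ← hS, ← hC]
          ring
        rwa [he] at h5
      simpa using h4.deriv
  have hr : ∀ c bv, ρ t (c, bv) = (cond c (S ^ 2) (C ^ 2)) * K c bv := by
    intro c bv
    have := (hev c bv).eq_of_nhds
    simpa [hS, hC] using this
  have hterm : ∀ c bv, (deriv (fun s => ρ s (c, bv)) t) ^ 2 / ρ t (c, bv)
      = 4 * k ^ 2 * (cond c (C ^ 2) (S ^ 2)) * K c bv := by
    intro c bv
    rw [hd, hr]
    rcases hcase with ⟨h1, h2⟩ | hk0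
    · have hSpos : 0 < S := Real.sin_pos_of_pos_of_lt_pi h1 (by linarith [Real.pi_pos])
      have hCpos : 0 < C := Real.cos_pos_of_mem_Ioo ⟨by linarith [Real.pi_pos], h2⟩
      rcases (hK0 c bv).lt_or_eq with hKpos | hK0'
      · cases c <;> simp only [cond_true, cond_false] <;> field_simp <;> ring
      · rw [← hK0']
        cases c <;> simp
    · subst hk0
      cases c <;> simp
  calc Real.sqrt (∑ i, (deriv (fun s => ρ s i) t) ^ 2 / ρ t i)
      = Real.sqrt (∑ c : Bool, ∑ bv : Fin n → Bool,
          4 * k ^ 2 * (cond c (C ^ 2) (S ^ 2)) * K c bv) := by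
        rw [Fintype.sum_prod_type]
        congr 1
        exact Finset.sum_congr rfl fun c _ => Finset.sum_congr rfl fun bv _ => hterm c bv
    _ = Real.sqrt (4 * k ^ 2) := by
        congr 1
        have : ∀ c : Bool, ∑ bv : Fin n → Bool, 4 * k ^ 2 * (cond c (C ^ 2) (S ^ 2)) * K c bv
            = 4 * k ^ 2 * (cond c (C ^ 2) (S ^ 2)) := by
          intro c
          rw [← Finset.mul_sum, hK1 c, mul_one]
        rw [Fintype.sum_bool, this true, this false]
        simp only [cond_true, cond_false]
        have h6 := Real.sin_sq_add_cos_sq (A + k * t)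
        simp only [← hS, ← hC] at h6
        nlinarith [h6]
    _ = 2 * |k| := by
        rw [show (4 : ℝ) * k ^ 2 = (2 * |k|) ^ 2 by rw [mul_pow, sq_abs]; ring]
        exact Real.sqrt_sq (by positivity)

end helper

/-- Fisher length of a path of distributions on a finite set. -/
noncomputable def fisherLen {ι : Type*} [Fintype ι] (p : ℝ → ι → ℝ) : ℝ :=
  ∫ t in (0:ℝ)..1, Real.sqrt (∑ i, (deriv (fun s => p s i) t) ^ 2 / p t i)

set_option maxHeartbeats 1000000 in
/-- **N-independent erasure bound for the Star model.**
With full control on the central-spin marginal and uniform control of the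
conditional outer-spin distributions, there is an erasure protocol from any
product thermal initial state (central marginal `μ`, each of the `n` outer spins
distributed as `ν`) to the deterministic all-zero state whose Fisher length is at
most `2π`; hence `τβW_diss = L² ≤ 4π²`, independent of the number of spins. -/
theorem star_model_erasure_dissipation_bound
    (n : ℕ) (μ ν : Bool → ℝ)
    (hμ : (∀ c, 0 ≤ μ c) ∧ ∑ c : Bool, μ c = 1)
    (hν : (∀ b, 0 ≤ ν b) ∧ ∑ b : Bool, ν b = 1) :
    ∃ (p : ℝ → Bool → ℝ) (q : ℝ → Bool → Bool → ℝ),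
      (∀ c, Continuous (fun t => p t c)) ∧
      (∀ c b, Continuous (fun t => q t c b)) ∧
      (∀ t ∈ Set.Icc (0:ℝ) 1,
        (∀ c, 0 ≤ p t c) ∧ (∑ c : Bool, p t c = 1) ∧
        ∀ c, (∀ b, 0 ≤ q t c b) ∧ ∑ b : Bool, q t c b = 1) ∧
      p 0 = μ ∧ (∀ c, q 0 c = ν) ∧
      (p 1 = fun c => if c = false then 1 else 0) ∧
      (∀ c, q 1 c = fun b => if b = false then 1 else 0) ∧
      fisherLen (fun t (i : Bool × (Fin n → Bool)) => p t i.1 * ∏ j, q t i.1 (i.2 j))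
        ≤ 2 * π ∧
      (fisherLen (fun t (i : Bool × (Fin n → Bool)) => p t i.1 * ∏ j, q t i.1 (i.2 j))) ^ 2
        ≤ 4 * π ^ 2 := by
  obtain ⟨hμ0, hμ1⟩ := hμ
  obtain ⟨hν0, hν1⟩ := hν
  have hμb : μ true + μ false = 1 := by simpa [Fintype.sum_bool] using hμ1
  have hνb : ν true + ν false = 1 := by simpa [Fintype.sum_bool] using hν1
  set α0 := Real.arccos (Real.sqrt (μ false)) with hα0def
  have hμf0 : 0 ≤ μ false := hμ0 false
  have hμf1 : μ false ≤ 1 := by linarith [hμ0 true]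
  have hcosα : Real.cos α0 = Real.sqrt (μ false) :=
    Real.cos_arccos (by linarith [Real.sqrt_nonneg (μ false)]) (by simpa using Real.sqrt_le_sqrt hμf1)
  have hcos2 : Real.cos α0 ^ 2 = μ false := by rw [hcosα, Real.sq_sqrt hμf0]
  have hα0nn : 0 ≤ α0 := Real.arccos_nonneg _
  have hα0le : α0 ≤ π / 2 := Real.arccos_le_pi_div_two.mpr (Real.sqrt_nonneg _)
  set k1 : ℝ := 4 * (π / 2 - α0) with hk1def
  have hk1nn : 0 ≤ k1 := by rw [hk1def]; linarith
  set a : ℝ → ℝ := fun t => α0 + (π / 2 - α0) * min 1 (max 0 (4 * t))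
      - (π / 2) * min 1 (max 0 (4 * t - 2)) with ha
  set cl : Bool → ℝ → ℝ := fun c t =>
      cond c (min 1 (max 0 (4 * t - 3))) (min 1 (max 0 (4 * t - 1))) with hcl
  set p : ℝ → Bool → ℝ := fun t c => cond c (Real.sin (a t) ^ 2) (Real.cos (a t) ^ 2) with hp
  set q : ℝ → Bool → Bool → ℝ := fun t c b =>
      (1 - cl c t) * ν b + cl c t * (if b = false then 1 else 0) with hq
  set ρ : ℝ → Bool × (Fin n → Bool) → ℝ :=
      fun t i => p t i.1 * ∏ j, q t i.1 (i.2 j) with hρ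
  -- continuity
  have hac : Continuous a := by
    rw [ha]; fun_prop
  have hclc : ∀ c, Continuous (cl c) := by
    intro c; cases c <;> simp only [hcl, cond_true, cond_false] <;> fun_prop
  have hpc : ∀ c, Continuous (fun t => p t c) := by
    intro c; cases c <;> simp only [hp, cond_true, cond_false]
    · exact (Real.continuous_cos.comp hac).pow 2
    · exact (Real.continuous_sin.comp hac).pow 2
  have hqc : ∀ c b, Continuous (fun t => q t c b) := by
    intro c b
    simp only [hq]
    exact ((continuous_const.sub (hclc c)).mul continuous_const).add
      ((hclc c).mul continuous_const)
  -- simplex membership (for all t)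
  have hcl0 : ∀ c t, 0 ≤ cl c t := by
    intro c t; rw [hcl]; cases c <;>
      exact le_min zero_le_one (le_max_left 0 _)
  have hcl1 : ∀ c t, cl c t ≤ 1 := by
    intro c t; rw [hcl]; cases c <;> exact min_le_left 1 _
  have hsimplex : ∀ t, (∀ c, 0 ≤ p t c) ∧ (∑ c : Bool, p t c = 1) ∧
      ∀ c, (∀ b, 0 ≤ q t c b) ∧ ∑ b : Bool, q t c b = 1 := by
    intro t
    refine ⟨fun c => ?_, ?_, fun c => ⟨fun b => ?_, ?_⟩⟩
    · cases c <;> simp only [hp, cond_true, cond_false] <;> positivity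
    · rw [Fintype.sum_bool, hp]
      simpa using Real.sin_sq_add_cos_sq (a t)
    · simp only [hq]
      have h0 := hcl0 c t
      have h1 := hcl1 c t
      have hb : (0:ℝ) ≤ if b = false then (1:ℝ) else 0 := by split <;> norm_num
      exact add_nonneg (mul_nonneg (by linarith) (hν0 b)) (mul_nonneg h0 hb)
    · rw [Fintype.sum_bool]
      simp only [hq]
      norm_num
      linear_combination (1 - cl c t) * hνb
  -- endpoints
  have ha0 : a 0 = α0 := by rw [ha]; norm_num
  have ha1 : a 1 = 0 := by rw [ha]; norm_num
  have hp0 : p 0 = μ := by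
    funext c
    rw [hp]
    cases c
    · simp only [cond_false, ha0, hcos2]
    · simp only [cond_true, ha0]
      have := Real.sin_sq_add_cos_sq α0
      rw [hcos2] at this
      linarith
  have hq0 : ∀ c, q 0 c = ν := by
    intro c; funext b
    rw [hq, hcl]
    cases c <;> norm_num
  have hp1 : p 1 = fun c => if c = false then 1 else 0 := by
    funext c
    simp only [hp, ha1]
    cases c <;> simp
  have hq1 : ∀ c, q 1 c = fun b => if b = false then 1 else 0 := by
    intro c; funext b
    rw [hq, hcl]
    cases c <;> norm_num
  -- Fisher integrand on the four open pieces
  have hKν0 : ∀ bv : Fin n → Bool, 0 ≤ ∏ j, ν (bv j) :=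
    fun bv => Finset.prod_nonneg fun j _ => hν0 _
  have hKν1 : ∑ bv : Fin n → Bool, ∏ j, ν (bv j) = 1 := aux_sum_pi n ν hν1
  have hKδ0 : ∀ bv : Fin n → Bool, 0 ≤ ∏ j, (if bv j = false then (1:ℝ) else 0) :=
    fun bv => Finset.prod_nonneg fun j _ => by split <;> norm_num
  have hKδ1 : ∑ bv : Fin n → Bool, ∏ j, (if bv j = false then (1:ℝ) else 0) = 1 :=
    aux_sum_pi n (fun b => if b = false then (1:ℝ) else 0) (by norm_num [Fintype.sum_bool])
  have hπ := Real.pi_pos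
  -- piece 1 : (0, 1/4)
  have hF1 : ∀ t ∈ Set.Ioo (0:ℝ) (1/4),
      Real.sqrt (∑ i, (deriv (fun s => ρ s i) t) ^ 2 / ρ t i) = 2 * k1 := by
    intro t ht
    rw [← abs_of_nonneg hk1nn]
    apply key_piece ρ t α0 k1 (fun _ bv => ∏ j, ν (bv j)) (fun _ bv => hKν0 bv)
      (fun _ => hKν1)
    · rcases eq_or_lt_of_le hα0le with heq | hlt
      · right; rw [hk1def, ← heq]; ring
      · left
        have hk1pos : 0 < k1 := by rw [hk1def]; linarith
        constructor
        · nlinarith [ht.1]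
        · nlinarith [ht.2]
    · intro c bv
      filter_upwards [isOpen_Ioo.mem_nhds ht] with s hs
      obtain ⟨hs0, hs1⟩ := hs
      have e1 : min 1 (max 0 (4 * s)) = 4 * s := by
        rw [max_eq_right (by linarith), min_eq_right (by linarith)]
      have e2 : min 1 (max 0 (4 * s - 1)) = 0 := by
        rw [max_eq_left (by linarith), min_eq_right (by norm_num)]
      have e3 : min 1 (max 0 (4 * s - 2)) = 0 := by
        rw [max_eq_left (by linarith), min_eq_right (by norm_num)]
      have e4 : min 1 (max 0 (4 * s - 3)) = 0 := by
        rw [max_eq_left (by linarith), min_eq_right (by norm_num)]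
      have has : a s = α0 + k1 * s := by
        rw [ha]; simp only []; rw [e1, e3, hk1def]; ring
      have hqs : ∀ b, q s c b = ν b := by
        intro b
        cases c
        · simp only [hq, hcl, cond_false, e2]; ring
        · simp only [hq, hcl, cond_true, e4]; ring
      rw [hρ]
      simp only []
      rw [Finset.prod_congr rfl fun j _ => hqs (bv j), hp]
      simp only [has]
  -- piece 2 : (1/4, 1/2)
  have hF2 : ∀ t ∈ Set.Ioo (1/4:ℝ) (1/2),
      Real.sqrt (∑ i, (deriv (fun s => ρ s i) t) ^ 2 / ρ t i) = 0 := by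
    intro t ht
    apply key_const ρ t (fun i => cond i.1 (∏ j, ν (i.2 j)) 0)
    rintro ⟨c, bv⟩
    filter_upwards [isOpen_Ioo.mem_nhds ht] with s hs
    obtain ⟨hs0, hs1⟩ := hs
    have e1 : min 1 (max 0 (4 * s)) = 1 := by
      rw [max_eq_right (by linarith), min_eq_left (by linarith)]
    have e3 : min 1 (max 0 (4 * s - 2)) = 0 := by
      rw [max_eq_left (by linarith), min_eq_right (by norm_num)]
    have e4 : min 1 (max 0 (4 * s - 3)) = 0 := by
      rw [max_eq_left (by linarith), min_eq_right (by norm_num)]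
    have has : a s = π / 2 := by
      rw [ha]; simp only []; rw [e1, e3]; ring
    cases c
    · simp only [hρ, hp, has, cond_false]
      rw [Real.cos_pi_div_two]
      norm_num
    · simp only [hρ, hp, has, cond_true]
      rw [Real.sin_pi_div_two]
      have hqs : ∀ b, q s true b = ν b := by
        intro b; simp only [hq, hcl, cond_true, e4]; ring
      rw [Finset.prod_congr rfl fun j _ => hqs (bv j)]
      norm_num
  -- piece 3 : (1/2, 3/4)
  have hF3 : ∀ t ∈ Set.Ioo (1/2:ℝ) (3/4),
      Real.sqrt (∑ i, (deriv (fun s => ρ s i) t) ^ 2 / ρ t i) = 2 * (2 * π) := by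
    intro t ht
    have habs : (2:ℝ) * (2 * π) = 2 * |(-(2*π))| := by
      rw [abs_neg, abs_of_nonneg (by positivity)]
    rw [habs]
    apply key_piece ρ t (3 * (π/2)) (-(2*π))
      (fun c bv => cond c (∏ j, ν (bv j)) (∏ j, (if bv j = false then (1:ℝ) else 0)))
    · intro c bv; cases c
      · exact hKδ0 bv
      · exact hKν0 bv
    · intro c; cases c
      · exact hKδ1
      · exact hKν1
    · left
      obtain ⟨h1, h2⟩ := ht
      constructor
      · have := mul_pos hπ (show (0:ℝ) < 3/4 - t by linarith)
        nlinarith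
      · have := mul_pos hπ (show (0:ℝ) < t - 1/2 by linarith)
        nlinarith
    · intro c bv
      filter_upwards [isOpen_Ioo.mem_nhds ht] with s hs
      obtain ⟨hs0, hs1⟩ := hs
      have e1 : min 1 (max 0 (4 * s)) = 1 := by
        rw [max_eq_right (by linarith), min_eq_left (by linarith)]
      have e2 : min 1 (max 0 (4 * s - 1)) = 1 := by
        rw [max_eq_right (by linarith), min_eq_left (by linarith)]
      have e3 : min 1 (max 0 (4 * s - 2)) = 4 * s - 2 := by
        rw [max_eq_right (by linarith), min_eq_right (by linarith)]
      have e4 : min 1 (max 0 (4 * s - 3)) = 0 := by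
        rw [max_eq_left (by linarith), min_eq_right (by norm_num)]
      have has : a s = 3 * (π/2) + (-(2*π)) * s := by
        rw [ha]; simp only []; rw [e1, e3]; ring
      cases c
      · have hqs : ∀ b, q s false b = (if b = false then (1:ℝ) else 0) := by
          intro b; simp only [hq, hcl, cond_false, e2]; ring
        simp only [hρ, hp, has, cond_false]
        rw [Finset.prod_congr rfl fun j _ => hqs (bv j)]
      · have hqs : ∀ b, q s true b = ν b := by
          intro b; simp only [hq, hcl, cond_true, e4]; ring
        simp only [hρ, hp, has, cond_true]
        rw [Finset.prod_congr rfl fun j _ => hqs (bv j)]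
  -- piece 4 : (3/4, ∞)
  have hF4 : ∀ t ∈ Set.Ioi (3/4:ℝ),
      Real.sqrt (∑ i, (deriv (fun s => ρ s i) t) ^ 2 / ρ t i) = 0 := by
    intro t ht
    apply key_const ρ t (fun i => cond i.1 0 (∏ j, (if i.2 j = false then (1:ℝ) else 0)))
    rintro ⟨c, bv⟩
    filter_upwards [isOpen_Ioi.mem_nhds ht] with s hs
    have hs0 : 3/4 < s := hs
    have e1 : min 1 (max 0 (4 * s)) = 1 := by
      rw [max_eq_right (by linarith), min_eq_left (by linarith)]
    have e2 : min 1 (max 0 (4 * s - 1)) = 1 := by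
      rw [max_eq_right (by linarith), min_eq_left (by linarith)]
    have e3 : min 1 (max 0 (4 * s - 2)) = 1 := by
      rw [max_eq_right (by linarith), min_eq_left (by linarith)]
    have has : a s = 0 := by
      rw [ha]; simp only []; rw [e1, e3]; ring
    cases c
    · have hqs : ∀ b, q s false b = (if b = false then (1:ℝ) else 0) := by
        intro b; simp only [hq, hcl, cond_false, e2]; ring
      simp only [hρ, hp, has, cond_false]
      rw [Real.cos_zero, Finset.prod_congr rfl fun j _ => hqs (bv j)]
      norm_num
    · simp only [hρ, hp, has, cond_true]
      rw [Real.sin_zero]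
      norm_num
  -- step function
  set G : ℝ → ℝ := fun x => (Set.Ioo (0:ℝ) (1/4)).indicator (fun _ => 2*k1) x
      + (Set.Ioo (1/2:ℝ) (3/4)).indicator (fun _ => 2*(2*π)) x with hG
  have hFG : ∀ x ∈ Set.Ioc (0:ℝ) 1, x ∉ ({1/4, 1/2, 3/4} : Set ℝ) →
      Real.sqrt (∑ i, (deriv (fun s => ρ s i) x) ^ 2 / ρ x i) = G x := by
    intro x hx hxn
    simp only [Set.mem_insert_iff, Set.mem_singleton_iff, not_or] at hxn
    obtain ⟨hx14, hx12, hx34⟩ := hxn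
    simp only [hG]
    by_cases h1 : x < 1/4
    · rw [Set.indicator_of_mem (Set.mem_Ioo.mpr ⟨hx.1, h1⟩),
        Set.indicator_of_notMem (by
          simp only [Set.mem_Ioo, not_and_or, not_lt]; left; linarith)]
      rw [hF1 x ⟨hx.1, h1⟩]; ring
    · by_cases h2 : x < 1/2
      · have hgt : 1/4 < x := lt_of_le_of_ne (not_lt.mp h1) (Ne.symm hx14)
        rw [Set.indicator_of_notMem (by
            simp only [Set.mem_Ioo, not_and_or, not_lt]; right; linarith),
          Set.indicator_of_notMem (by
            simp only [Set.mem_Ioo, not_and_or, not_lt]; left; linarith)]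
        rw [hF2 x ⟨hgt, h2⟩]; ring
      · by_cases h3 : x < 3/4
        · have hgt : 1/2 < x := lt_of_le_of_ne (not_lt.mp h2) (Ne.symm hx12)
          rw [Set.indicator_of_notMem (by
              simp only [Set.mem_Ioo, not_and_or, not_lt]; right; linarith),
            Set.indicator_of_mem (Set.mem_Ioo.mpr ⟨hgt, h3⟩)]
          rw [hF3 x ⟨hgt, h3⟩]; ring
        · have hgt : 3/4 < x := lt_of_le_of_ne (not_lt.mp h3) (Ne.symm hx34)
          rw [Set.indicator_of_notMem (by
              simp only [Set.mem_Ioo, not_and_or, not_lt]; right; linarith),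
            Set.indicator_of_notMem (by
              simp only [Set.mem_Ioo, not_and_or, not_lt]; right; linarith)]
          rw [hF4 x hgt]; ring
  have hnull : volume ({1/4, 1/2, 3/4} : Set ℝ) = 0 :=
    Set.Finite.measure_zero (Set.toFinite _) volume
  have hmain : fisherLen ρ = ∫ x in (0:ℝ)..1, G x := by
    simp only [fisherLen]
    apply intervalIntegral.integral_congr_ae
    filter_upwards [MeasureTheory.measure_eq_zero_iff_ae_notMem.mp hnull] with x hx hxI
    have hxI' : x ∈ Set.Ioc (0:ℝ) 1 := by
      rwa [Set.uIoc_of_le (by norm_num : (0:ℝ) ≤ 1)] at hxI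
    exact hFG x hxI' hx
  have hi : ∀ (u v c : ℝ), MeasureTheory.Integrable
      ((Set.Ioo u v).indicator (fun _ => c)) (volume.restrict (Set.Ioc (0:ℝ) 1)) := by
    intro u v c
    rw [MeasureTheory.integrable_indicator_iff measurableSet_Ioo]
    apply (MeasureTheory.integrableOn_const_iff (hC := enorm_ne_top)).mpr
    right
    exact lt_of_le_of_lt (MeasureTheory.Measure.restrict_apply_le _ _) measure_Ioo_lt_top
  have hsub1 : Set.Ioo (0:ℝ) (1/4) ⊆ Set.Ioc (0:ℝ) 1 :=
    fun x hx => ⟨hx.1, by linarith [hx.2]⟩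
  have hsub2 : Set.Ioo (1/2:ℝ) (3/4) ⊆ Set.Ioc (0:ℝ) 1 :=
    fun x hx => ⟨by linarith [hx.1], by linarith [hx.2]⟩
  have hGval : ∫ x in (0:ℝ)..1, G x = 2 * π - 2 * α0 := by
    simp only [hG]
    rw [intervalIntegral.integral_of_le (by norm_num : (0:ℝ) ≤ 1)]
    rw [MeasureTheory.integral_add (hi _ _ _) (hi _ _ _)]
    rw [MeasureTheory.integral_indicator measurableSet_Ioo,
        MeasureTheory.integral_indicator measurableSet_Ioo]
    rw [MeasureTheory.Measure.restrict_restrict measurableSet_Ioo,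
        MeasureTheory.Measure.restrict_restrict measurableSet_Ioo]
    rw [Set.inter_eq_left.mpr hsub1, Set.inter_eq_left.mpr hsub2]
    rw [MeasureTheory.setIntegral_const, MeasureTheory.setIntegral_const]
    rw [Real.volume_real_Ioo_of_le (by norm_num), Real.volume_real_Ioo_of_le (by norm_num), hk1def]
    rw [smul_eq_mul, smul_eq_mul]
    ring
  have hLval : fisherLen ρ = 2 * π - 2 * α0 := by rw [hmain, hGval]
  have hb1 : fisherLen ρ ≤ 2 * π := by rw [hLval]; linarith
  have hb2 : (fisherLen ρ) ^ 2 ≤ 4 * π ^ 2 := by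
    rw [hLval]
    nlinarith [mul_nonneg hα0nn (show (0:ℝ) ≤ 2*π - α0 by linarith)]
  rw [hρ] at hb1 hb2
  exact ⟨p, q, hpc, hqc, fun t _ => hsimplex t, hp0, hq0, hp1, hq1, hb1, hb2⟩
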